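/- For every point (p, q, r) ∈ ℝ³ satisfying −1 ≤ p ≤ 1, −1 ≤ q ≤ 1, −1 ≤ r ≤ 1 and 1 − p² − q² − r² + 2pqr ≥ 0, there exist matrices A, B, C in SU(2) such that det(λA + μB + νC) = λ² + μ² + ν² + 2pλμ + 2qλν + 2rμν for all complex λ, μ, ν. -/

import Mathlib

set_option autoImplicit false
open Matrix

noncomputable def Qm (w x y z : ℝ) : Matrix (Fin 2) (Fin 2) ℂ :=
  !![(w : ℂ) + x * Complex.I, (y : ℂ) + z * Complex.I;
     -(y : ℂ) + z * Complex.I, (w : ℂ) - x * Complex.I]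

lemma Qm_mem (w x y z : ℝ) (h : w ^ 2 + x ^ 2 + y ^ 2 + z ^ 2 = 1) :
    Qm w x y z ∈ Matrix.specialUnitaryGroup (Fin 2) ℂ := by
  have hc : (w : ℂ) ^ 2 + x ^ 2 + y ^ 2 + z ^ 2 = 1 := by
    exact_mod_cast congrArg (Complex.ofReal ·) h
  rw [Matrix.mem_specialUnitaryGroup_iff]
  constructor
  · rw [Matrix.mem_unitaryGroup_iff]
    ext i j
    fin_cases i <;> fin_cases j <;>
      simp [Qm, Matrix.mul_apply, Fin.sum_univ_succ, Matrix.star_apply, Complex.ext_iff] <;>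
      exact ⟨by nlinarith [h], by ring⟩
  · simp only [Qm, Matrix.det_fin_two_of]
    linear_combination hc - ((x:ℂ)^2 + z^2) * Complex.I_sq

lemma det_comb (w1 x1 y1 z1 w2 x2 y2 z2 w3 x3 y3 z3 : ℝ)
    (h1 : w1 ^ 2 + x1 ^ 2 + y1 ^ 2 + z1 ^ 2 = 1)
    (h2 : w2 ^ 2 + x2 ^ 2 + y2 ^ 2 + z2 ^ 2 = 1)
    (h3 : w3 ^ 2 + x3 ^ 2 + y3 ^ 2 + z3 ^ 2 = 1)
    (p q r : ℝ)
    (h12 : w1 * w2 + x1 * x2 + y1 * y2 + z1 * z2 = p)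
    (h13 : w1 * w3 + x1 * x3 + y1 * y3 + z1 * z3 = q)
    (h23 : w2 * w3 + x2 * x3 + y2 * y3 + z2 * z3 = r)
    (l m n : ℂ) :
    Matrix.det (l • Qm w1 x1 y1 z1 + m • Qm w2 x2 y2 z2 + n • Qm w3 x3 y3 z3)
      = l ^ 2 + m ^ 2 + n ^ 2 + 2 * (p : ℂ) * l * m + 2 * (q : ℂ) * l * n
        + 2 * (r : ℂ) * m * n := by
  have c1 : (w1 : ℂ) ^ 2 + x1 ^ 2 + y1 ^ 2 + z1 ^ 2 = 1 := by exact_mod_cast congrArg (Complex.ofReal ·) h1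
  have c2 : (w2 : ℂ) ^ 2 + x2 ^ 2 + y2 ^ 2 + z2 ^ 2 = 1 := by exact_mod_cast congrArg (Complex.ofReal ·) h2
  have c3 : (w3 : ℂ) ^ 2 + x3 ^ 2 + y3 ^ 2 + z3 ^ 2 = 1 := by exact_mod_cast congrArg (Complex.ofReal ·) h3
  have c12 : (w1 : ℂ) * w2 + x1 * x2 + y1 * y2 + z1 * z2 = p := by exact_mod_cast congrArg (Complex.ofReal ·) h12
  have c13 : (w1 : ℂ) * w3 + x1 * x3 + y1 * y3 + z1 * z3 = q := by exact_mod_cast congrArg (Complex.ofReal ·) h13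
  have c23 : (w2 : ℂ) * w3 + x2 * x3 + y2 * y3 + z2 * z3 = r := by exact_mod_cast congrArg (Complex.ofReal ·) h23
  have hI : Complex.I ^ 2 = -1 := Complex.I_sq
  rw [Matrix.det_fin_two]
  simp only [Qm, Matrix.add_apply, Matrix.smul_apply, Matrix.of_apply, Matrix.cons_val', 
    Matrix.cons_val_zero, Matrix.cons_val_one, Matrix.head_cons, Matrix.empty_val',
    Matrix.cons_val_fin_one, Matrix.head_fin_const, smul_eq_mul]
  linear_combination (l^2) * c1 + (m^2) * c2 + (n^2) * c3 + (2*l*m) * c12 + (2*l*n) * c13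
    + (2*m*n) * c23 - ((l*x1+m*x2+n*x3)^2 + (l*z1+m*z2+n*z3)^2) * hI

/-- every point of the body `Δ` arises as the spectral invariants of a triple
of `SU(2)` matrices. -/
theorem SU2_triple_of_point_in_Delta
    (p q r : ℝ) (hp : -1 ≤ p ∧ p ≤ 1) (hq : -1 ≤ q ∧ q ≤ 1) (hr : -1 ≤ r ∧ r ≤ 1)
    (hΔ : 0 ≤ 1 - p ^ 2 - q ^ 2 - r ^ 2 + 2 * p * q * r) :
    ∃ A B C : Matrix.specialUnitaryGroup (Fin 2) ℂ,
      ∀ l m n : ℂ,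
        Matrix.det (l • (A : Matrix (Fin 2) (Fin 2) ℂ) + m • (B : Matrix (Fin 2) (Fin 2) ℂ)
            + n • (C : Matrix (Fin 2) (Fin 2) ℂ))
          = l ^ 2 + m ^ 2 + n ^ 2 + 2 * (p : ℂ) * l * m + 2 * (q : ℂ) * l * n
            + 2 * (r : ℂ) * m * n := by
  have hq2 : q ^ 2 ≤ 1 := by nlinarith [hq.1, hq.2]
  by_cases hp2 : p ^ 2 = 1
  · -- degenerate case : p = ±1, so q = p * r
    have hqr : q = p * r := by nlinarith [sq_nonneg (q - p * r), hp2]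
    have hs : Real.sqrt (1 - q ^ 2) ^ 2 = 1 - q ^ 2 := Real.sq_sqrt (by linarith)
    refine ⟨⟨_, Qm_mem 1 0 0 0 (by norm_num)⟩,
      ⟨_, Qm_mem p 0 0 0 (by linear_combination hp2)⟩,
      ⟨_, Qm_mem q (Real.sqrt (1 - q ^ 2)) 0 0 (by linear_combination hs)⟩, ?_⟩
    intro l m n
    exact det_comb 1 0 0 0 p 0 0 0 q (Real.sqrt (1 - q ^ 2)) 0 0
      (by norm_num) (by linear_combination hp2) (by linear_combination hs)
      p q r (by ring) (by ring) (by linear_combination p * hqr + r * hp2) l m n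
  · have hβ2 : 0 < 1 - p ^ 2 := lt_of_le_of_ne (by nlinarith [hp.1, hp.2])
      (by intro h; exact hp2 (by linarith))
    set β := Real.sqrt (1 - p ^ 2) with hβdef
    have hβ : 0 < β := Real.sqrt_pos.2 hβ2
    have hβsq : β ^ 2 = 1 - p ^ 2 := Real.sq_sqrt hβ2.le
    set y := (r - p * q) / β with hydef
    have hy : β * y = r - p * q := by rw [hydef, mul_div_cancel₀ _ hβ.ne']
    set D := 1 - p ^ 2 - q ^ 2 - r ^ 2 + 2 * p * q * r with hDdef
    set z := Real.sqrt D / β with hzdef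
    have hz : (β * z) ^ 2 = D := by
      rw [hzdef, mul_div_cancel₀ _ hβ.ne']; exact Real.sq_sqrt hΔ
    have hnorm3 : q ^ 2 + y ^ 2 + z ^ 2 = 1 := by
      have key : (β * y) ^ 2 + (β * z) ^ 2 = β ^ 2 * (1 - q ^ 2) := by
        rw [hz, hβsq]; linear_combination (β * y + (r - p * q)) * hy
      have h1 : β ^ 2 * (q ^ 2 + y ^ 2 + z ^ 2) = β ^ 2 * 1 := by
        linear_combination key
      have := mul_left_cancel₀ (pow_ne_zero 2 hβ.ne') h1
      linarith
    refine ⟨⟨_, Qm_mem 1 0 0 0 (by norm_num)⟩,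
      ⟨_, Qm_mem p β 0 0 (by linear_combination hβsq)⟩,
      ⟨_, Qm_mem q y z 0 (by linear_combination hnorm3)⟩, ?_⟩
    intro l m n
    exact det_comb 1 0 0 0 p β 0 0 q y z 0
      (by norm_num) (by linear_combination hβsq) (by linear_combination hnorm3)
      p q r (by ring) (by ring) (by linear_combination hy) l m n
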